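/- Let r ∈ ℓ²(ℤ) and for each n > N let H(n) be a Hilbert–Schmidt matrix operator on ℓ² with H_* := sup_{n>N} ‖H(n)‖_{HS} < ∞. Then ∑_{i,j ≠ ±n} |(n-i)/(n+i)|^{1/2} |(n+j)/(n-j)|^{1/2} |r(n-i)| |r(n+j)| |H_{ij}(n)| ≤ C n ‖r‖ (E_n(r) + ‖r‖/n) H_*, where C is an absolute constant. -/

import Mathlib

open scoped BigOperators

noncomputable section

private lemma tsum_cs {ι : Type*} (f g : ι → ℝ) (hf0 : ∀ i, 0 ≤ f i) (hg0 : ∀ i, 0 ≤ g i)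
    (hf : Summable (fun i => f i ^ 2)) (hg : Summable (fun i => g i ^ 2)) :
    ∑' i, f i * g i ≤ Real.sqrt (∑' i, f i ^ 2) * Real.sqrt (∑' i, g i ^ 2) := by
  have hfg : Summable (fun i => f i * g i) := by
    refine Summable.of_nonneg_of_le (fun i => mul_nonneg (hf0 i) (hg0 i))
      (fun i => ?_) ((hf.add hg).div_const 2)
    nlinarith [sq_nonneg (f i - g i)]
  refine Summable.tsum_le_of_sum_le hfg (fun s => ?_)
  calc ∑ i ∈ s, f i * g i
      ≤ Real.sqrt (∑ i ∈ s, f i ^ 2) * Real.sqrt (∑ i ∈ s, g i ^ 2) :=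
        Real.sum_mul_le_sqrt_mul_sqrt s f g
    _ ≤ _ :=
        mul_le_mul (Real.sqrt_le_sqrt (Summable.sum_le_tsum s (fun i _ => sq_nonneg _) hf))
          (Real.sqrt_le_sqrt (Summable.sum_le_tsum s (fun i _ => sq_nonneg _) hg))
          (Real.sqrt_nonneg _) (Real.sqrt_nonneg _)

private lemma ratio_bound (n : ℕ) (hn : 1 ≤ n) (k : ℤ) :
    |(k : ℝ) / (2 * (n : ℝ) - (k : ℝ))| ≤ if (n : ℤ) ≤ |k| then 4 * (n : ℝ) else 1 := by
  have hm : (1 : ℝ) ≤ (n : ℝ) := by exact_mod_cast hn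
  rw [abs_div]
  split_ifs with h
  · by_cases h2 : k = 2 * (n : ℤ)
    · subst h2
      push_cast
      rw [sub_self, abs_zero, div_zero]
      positivity
    · have hb1 : (1 : ℝ) ≤ |2 * (n : ℝ) - (k : ℝ)| := by
        have h0 : (1 : ℤ) ≤ |2 * (n : ℤ) - k| := Int.one_le_abs (by omega)
        have : ((1 : ℤ) : ℝ) ≤ ((|2 * (n : ℤ) - k| : ℤ) : ℝ) := by exact_mod_cast h0
        rwa [Int.cast_abs, Int.cast_one, Int.cast_sub, Int.cast_mul, Int.cast_ofNat,
          Int.cast_natCast] at this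
      by_cases h4 : |k| ≤ 4 * (n : ℤ)
      · have hk4 : |(k : ℝ)| ≤ 4 * (n : ℝ) := by
          have : ((|k| : ℤ) : ℝ) ≤ ((4 * (n : ℤ) : ℤ) : ℝ) := by exact_mod_cast h4
          rwa [Int.cast_abs, Int.cast_mul, Int.cast_ofNat, Int.cast_natCast] at this
        calc |(k : ℝ)| / |2 * (n : ℝ) - (k : ℝ)| ≤ |(k : ℝ)| :=
              div_le_self (abs_nonneg _) hb1
          _ ≤ 4 * (n : ℝ) := hk4
      · have hk4 : 4 * (n : ℝ) < |(k : ℝ)| := by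
          have h4' : 4 * (n : ℤ) < |k| := by omega
          have : ((4 * (n : ℤ) : ℤ) : ℝ) < ((|k| : ℤ) : ℝ) := by exact_mod_cast h4'
          rwa [Int.cast_abs, Int.cast_mul, Int.cast_ofNat, Int.cast_natCast] at this
        have hb : |(k : ℝ)| - 2 * (n : ℝ) ≤ |2 * (n : ℝ) - (k : ℝ)| := by
          have h1 := abs_sub_abs_le_abs_sub (k : ℝ) (2 * (n : ℝ))
          rw [abs_sub_comm] at h1
          have h2 : |2 * (n : ℝ)| = 2 * (n : ℝ) := abs_of_nonneg (by linarith)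
          linarith
        have hbpos : 0 < |2 * (n : ℝ) - (k : ℝ)| := by linarith
        rw [div_le_iff₀ hbpos]
        nlinarith [abs_nonneg (k : ℝ)]
  · have hk : |k| < (n : ℤ) := by omega
    have hkr : |(k : ℝ)| < (n : ℝ) := by
      have : ((|k| : ℤ) : ℝ) < ((n : ℤ) : ℝ) := by exact_mod_cast hk
      rwa [Int.cast_abs, Int.cast_natCast] at this
    have hb : 2 * (n : ℝ) - |(k : ℝ)| ≤ |2 * (n : ℝ) - (k : ℝ)| := by
      have h1 := abs_sub_abs_le_abs_sub (2 * (n : ℝ)) (k : ℝ)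
      have h2 : |2 * (n : ℝ)| = 2 * (n : ℝ) := abs_of_nonneg (by linarith)
      linarith
    rw [div_le_one (by linarith)]
    linarith

/-- Lemma 3.2 of the paper. -/
theorem weighted_double_sum_estimate :
    ∃ C : ℝ, 0 < C ∧
      ∀ (N : ℕ) (r : ℤ → ℂ) (H : ℕ → ℤ → ℤ → ℂ) (Hstar : ℝ),
        Summable (fun k => ‖r k‖ ^ 2) →
        (∀ n : ℕ, N < n → Summable (fun p : ℤ × ℤ => ‖H n p.1 p.2‖ ^ 2) ∧
          Real.sqrt (∑' p : ℤ × ℤ, ‖H n p.1 p.2‖ ^ 2) ≤ Hstar) →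
        ∀ n : ℕ, N < n →
          (∑' p : {p : ℤ × ℤ // p.1 ≠ (n : ℤ) ∧ p.1 ≠ -(n : ℤ) ∧
              p.2 ≠ (n : ℤ) ∧ p.2 ≠ -(n : ℤ)},
            Real.sqrt |((n : ℝ) - (p.1.1 : ℝ)) / ((n : ℝ) + (p.1.1 : ℝ))| *
              Real.sqrt |((n : ℝ) + (p.1.2 : ℝ)) / ((n : ℝ) - (p.1.2 : ℝ))| *
              ‖r ((n : ℤ) - p.1.1)‖ * ‖r ((n : ℤ) + p.1.2)‖ * ‖H n p.1.1 p.1.2‖)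
          ≤ C * (n : ℝ) * Real.sqrt (∑' k : ℤ, ‖r k‖ ^ 2) *
            (Real.sqrt (∑' k : {k : ℤ // (n : ℤ) ≤ |k|}, ‖r k.1‖ ^ 2) +
              Real.sqrt (∑' k : ℤ, ‖r k‖ ^ 2) / (n : ℝ)) * Hstar := by
  refine ⟨4, by norm_num, ?_⟩
  intro N r H Hstar hr hHall n hn
  obtain ⟨hHsum, hHle⟩ := hHall n hn
  have hn1 : 1 ≤ n := Nat.lt_of_le_of_lt (Nat.zero_le N) hn
  have hnR : (1 : ℝ) ≤ (n : ℝ) := by exact_mod_cast hn1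
  have hHstar0 : 0 ≤ Hstar := (Real.sqrt_nonneg _).trans hHle
  set R : ℝ := Real.sqrt (∑' k : ℤ, ‖r k‖ ^ 2) with hRdef
  set E : ℝ := Real.sqrt (∑' k : {k : ℤ // (n : ℤ) ≤ |k|}, ‖r k.1‖ ^ 2) with hEdef
  have hR0 : 0 ≤ R := Real.sqrt_nonneg _
  have hE0 : 0 ≤ E := Real.sqrt_nonneg _
  have hR2 : R ^ 2 = ∑' k : ℤ, ‖r k‖ ^ 2 :=
    Real.sq_sqrt (tsum_nonneg fun _ => sq_nonneg _)
  have hE2 : E ^ 2 = ∑' k : {k : ℤ // (n : ℤ) ≤ |k|}, ‖r k.1‖ ^ 2 :=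
    Real.sq_sqrt (tsum_nonneg fun _ => sq_nonneg _)
  -- The weight function after substitution
  set W : ℤ → ℝ := fun k => |(k : ℝ) / (2 * (n : ℝ) - (k : ℝ))| * ‖r k‖ ^ 2 with hWdef
  have hW0 : ∀ k, 0 ≤ W k := fun k => mul_nonneg (abs_nonneg _) (sq_nonneg _)
  have hWle4n : ∀ k, W k ≤ 4 * (n : ℝ) * ‖r k‖ ^ 2 := by
    intro k
    have h := ratio_bound n hn1 k
    have h' : |(k : ℝ) / (2 * (n : ℝ) - (k : ℝ))| ≤ 4 * (n : ℝ) := by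
      split_ifs at h with hc
      · exact h
      · linarith
    exact mul_le_mul_of_nonneg_right h' (sq_nonneg _)
  have hWsum : Summable W :=
    Summable.of_nonneg_of_le hW0 hWle4n (hr.mul_left _)
  -- the indicator comparison function
  set φ : ℤ → ℝ := fun k => ‖r k‖ ^ 2 +
      Set.indicator {k : ℤ | (n : ℤ) ≤ |k|} (fun k => 4 * (n : ℝ) * ‖r k‖ ^ 2) k with hφdef
  have hindsum : Summable (Set.indicator {k : ℤ | (n : ℤ) ≤ |k|}
      (fun k => 4 * (n : ℝ) * ‖r k‖ ^ 2)) := (hr.mul_left _).indicator _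
  have hφsum : Summable φ := hr.add hindsum
  have hWφ : ∀ k, W k ≤ φ k := by
    intro k
    have h := ratio_bound n hn1 k
    by_cases hc : (n : ℤ) ≤ |k|
    · rw [if_pos hc] at h
      have : W k ≤ 4 * (n : ℝ) * ‖r k‖ ^ 2 := hWle4n k
      have hind : Set.indicator {k : ℤ | (n : ℤ) ≤ |k|}
          (fun k => 4 * (n : ℝ) * ‖r k‖ ^ 2) k = 4 * (n : ℝ) * ‖r k‖ ^ 2 :=
        Set.indicator_of_mem (show k ∈ {k : ℤ | (n : ℤ) ≤ |k|} from hc) _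
      simp only [hφdef, hind]
      nlinarith [sq_nonneg ‖r k‖]
    · rw [if_neg hc] at h
      have hind : Set.indicator {k : ℤ | (n : ℤ) ≤ |k|}
          (fun k => 4 * (n : ℝ) * ‖r k‖ ^ 2) k = 0 :=
        Set.indicator_of_notMem (show k ∉ {k : ℤ | (n : ℤ) ≤ |k|} from hc) _
      have : W k ≤ 1 * ‖r k‖ ^ 2 := mul_le_mul_of_nonneg_right h (sq_nonneg _)
      simp only [hφdef, hind]
      linarith
  have hφtsum : ∑' k, φ k = R ^ 2 + 4 * (n : ℝ) * E ^ 2 := by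
    rw [hφdef, Summable.tsum_add hr hindsum, hR2, hE2]
    congr 1
    rw [← tsum_subtype {k : ℤ | (n : ℤ) ≤ |k|} (fun k => 4 * (n : ℝ) * ‖r k‖ ^ 2),
      tsum_mul_left]
    rfl
  have hWtsum : ∑' k, W k ≤ R ^ 2 + 4 * (n : ℝ) * E ^ 2 := by
    rw [← hφtsum]
    exact Summable.tsum_le_tsum hWφ hWsum hφsum
  -- A and B
  set A : ℤ → ℝ := fun i =>
    Real.sqrt |((n : ℝ) - (i : ℝ)) / ((n : ℝ) + (i : ℝ))| * ‖r ((n : ℤ) - i)‖ with hAdef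
  set B : ℤ → ℝ := fun j =>
    Real.sqrt |((n : ℝ) + (j : ℝ)) / ((n : ℝ) - (j : ℝ))| * ‖r ((n : ℤ) + j)‖ with hBdef
  have hA0 : ∀ i, 0 ≤ A i := fun i => mul_nonneg (Real.sqrt_nonneg _) (norm_nonneg _)
  have hB0 : ∀ j, 0 ≤ B j := fun j => mul_nonneg (Real.sqrt_nonneg _) (norm_nonneg _)
  have hA2W : ∀ i, A i ^ 2 = W ((n : ℤ) - i) := by
    intro i
    rw [hAdef, hWdef]
    simp only [mul_pow, Real.sq_sqrt (abs_nonneg _)]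
    push_cast
    ring_nf
  have hB2W : ∀ j, B j ^ 2 = W ((n : ℤ) + j) := by
    intro j
    rw [hBdef, hWdef]
    simp only [mul_pow, Real.sq_sqrt (abs_nonneg _)]
    push_cast
    ring_nf
  have hA2sum : Summable (fun i => A i ^ 2) := by
    have h : Summable (W ∘ (Equiv.subLeft (n : ℤ))) :=
      (Equiv.subLeft (n : ℤ)).summable_iff.mpr hWsum
    exact h.congr fun i => by
      rw [Function.comp_apply, Equiv.subLeft_apply, ← hA2W i]
  have hB2sum : Summable (fun j => B j ^ 2) := by
    have h : Summable (W ∘ (Equiv.addLeft (n : ℤ))) :=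
      (Equiv.addLeft (n : ℤ)).summable_iff.mpr hWsum
    exact h.congr fun j => by
      rw [Function.comp_apply, Equiv.coe_addLeft, ← hB2W j]
  have hA2tsum : ∑' i, A i ^ 2 ≤ R ^ 2 + 4 * (n : ℝ) * E ^ 2 := by
    have h1 : ∑' i, A i ^ 2 = ∑' k, W k := by
      have h := (Equiv.subLeft (n : ℤ)).tsum_eq W
      simp only [Equiv.subLeft_apply] at h
      rw [tsum_congr hA2W, h]
    rw [h1]; exact hWtsum
  have hB2tsum : ∑' j, B j ^ 2 ≤ R ^ 2 + 4 * (n : ℝ) * E ^ 2 := by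
    have h1 : ∑' j, B j ^ 2 = ∑' k, W k := by
      have h := (Equiv.addLeft (n : ℤ)).tsum_eq W
      simp only [Equiv.coe_addLeft] at h
      rw [tsum_congr hB2W, h]
    rw [h1]; exact hWtsum
  -- the product function
  set f : ℤ × ℤ → ℝ := fun p => A p.1 * B p.2 with hfdef
  set g : ℤ × ℤ → ℝ := fun p => ‖H n p.1 p.2‖ with hgdef
  have hf0 : ∀ p, 0 ≤ f p := fun p => mul_nonneg (hA0 _) (hB0 _)
  have hg0 : ∀ p, 0 ≤ g p := fun p => norm_nonneg _
  have hf2sum : Summable (fun p => f p ^ 2) := by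
    have := Summable.mul_of_nonneg hA2sum hB2sum (fun i => sq_nonneg (A i))
      (fun j => sq_nonneg (B j))
    exact this.congr fun p => by simp [hfdef, mul_pow]
  have hg2sum : Summable (fun p => g p ^ 2) := hHsum
  have hGsum : Summable (fun p => f p * g p) := by
    refine Summable.of_nonneg_of_le (fun p => mul_nonneg (hf0 p) (hg0 p))
      (fun p => ?_) ((hf2sum.add hg2sum).div_const 2)
    nlinarith [sq_nonneg (f p - g p)]
  -- bound on ∑' f^2
  have hf2tsum : ∑' p : ℤ × ℤ, f p ^ 2 ≤ (R ^ 2 + 4 * (n : ℝ) * E ^ 2) ^ 2 := by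
    refine Summable.tsum_le_of_sum_le hf2sum (fun s => ?_)
    calc ∑ p ∈ s, f p ^ 2
        ≤ ∑ p ∈ (s.image Prod.fst) ×ˢ (s.image Prod.snd), f p ^ 2 :=
          Finset.sum_le_sum_of_subset_of_nonneg Finset.subset_product
            (fun _ _ _ => sq_nonneg _)
      _ = (∑ i ∈ s.image Prod.fst, A i ^ 2) * (∑ j ∈ s.image Prod.snd, B j ^ 2) := by
          rw [Finset.sum_mul_sum, Finset.sum_product]
          exact Finset.sum_congr rfl fun i _ => Finset.sum_congr rfl fun j _ => by
            simp [hfdef, mul_pow]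
      _ ≤ (R ^ 2 + 4 * (n : ℝ) * E ^ 2) * (R ^ 2 + 4 * (n : ℝ) * E ^ 2) := by
          have hSA := (Summable.sum_le_tsum (s.image Prod.fst) (fun i _ => sq_nonneg (A i))
            hA2sum).trans hA2tsum
          have hSB := (Summable.sum_le_tsum (s.image Prod.snd) (fun j _ => sq_nonneg (B j))
            hB2sum).trans hB2tsum
          exact mul_le_mul hSA hSB (Finset.sum_nonneg fun _ _ => sq_nonneg _)
            (by positivity)
      _ = (R ^ 2 + 4 * (n : ℝ) * E ^ 2) ^ 2 := (sq _).symm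
  -- Cauchy-Schwarz
  have hCS : ∑' p : ℤ × ℤ, f p * g p ≤ (R ^ 2 + 4 * (n : ℝ) * E ^ 2) * Hstar := by
    calc ∑' p : ℤ × ℤ, f p * g p
        ≤ Real.sqrt (∑' p, f p ^ 2) * Real.sqrt (∑' p, g p ^ 2) :=
          tsum_cs f g hf0 hg0 hf2sum hg2sum
      _ ≤ (R ^ 2 + 4 * (n : ℝ) * E ^ 2) * Hstar := by
          refine mul_le_mul ?_ hHle (Real.sqrt_nonneg _) (by positivity)
          calc Real.sqrt (∑' p, f p ^ 2)
              ≤ Real.sqrt ((R ^ 2 + 4 * (n : ℝ) * E ^ 2) ^ 2) :=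
                Real.sqrt_le_sqrt hf2tsum
            _ = R ^ 2 + 4 * (n : ℝ) * E ^ 2 := Real.sqrt_sq (by positivity)
  -- the LHS equals the subtype sum of f*g
  have hLHS : (∑' p : {p : ℤ × ℤ // p.1 ≠ (n : ℤ) ∧ p.1 ≠ -(n : ℤ) ∧
        p.2 ≠ (n : ℤ) ∧ p.2 ≠ -(n : ℤ)},
      Real.sqrt |((n : ℝ) - (p.1.1 : ℝ)) / ((n : ℝ) + (p.1.1 : ℝ))| *
        Real.sqrt |((n : ℝ) + (p.1.2 : ℝ)) / ((n : ℝ) - (p.1.2 : ℝ))| *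
        ‖r ((n : ℤ) - p.1.1)‖ * ‖r ((n : ℤ) + p.1.2)‖ * ‖H n p.1.1 p.1.2‖)
      ≤ ∑' p : ℤ × ℤ, f p * g p := by
    have heq : ∀ p : {p : ℤ × ℤ // p.1 ≠ (n : ℤ) ∧ p.1 ≠ -(n : ℤ) ∧
        p.2 ≠ (n : ℤ) ∧ p.2 ≠ -(n : ℤ)},
        Real.sqrt |((n : ℝ) - (p.1.1 : ℝ)) / ((n : ℝ) + (p.1.1 : ℝ))| *
          Real.sqrt |((n : ℝ) + (p.1.2 : ℝ)) / ((n : ℝ) - (p.1.2 : ℝ))| *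
          ‖r ((n : ℤ) - p.1.1)‖ * ‖r ((n : ℤ) + p.1.2)‖ * ‖H n p.1.1 p.1.2‖
        = f p.1 * g p.1 := by
      intro p
      simp only [hfdef, hgdef, hAdef, hBdef]
      ring
    rw [tsum_congr heq]
    exact Summable.tsum_subtype_le (fun p : ℤ × ℤ => f p * g p)
      {p : ℤ × ℤ | p.1 ≠ (n : ℤ) ∧ p.1 ≠ -(n : ℤ) ∧ p.2 ≠ (n : ℤ) ∧ p.2 ≠ -(n : ℤ)}
      (fun p => mul_nonneg (hf0 p) (hg0 p)) hGsum
  -- final arithmetic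
  have hEleR : E ≤ R := by
    refine Real.sqrt_le_sqrt ?_
    exact Summable.tsum_subtype_le (fun k : ℤ => ‖r k‖ ^ 2) {k : ℤ | (n : ℤ) ≤ |k|}
      (fun k => sq_nonneg _) hr
  refine hLHS.trans (hCS.trans ?_)
  have hnpos : (0 : ℝ) < (n : ℝ) := by linarith
  have hexp : 4 * (n : ℝ) * R * (E + R / (n : ℝ)) = 4 * (n : ℝ) * R * E + 4 * R ^ 2 := by
    field_simp
  rw [hexp]
  refine mul_le_mul_of_nonneg_right ?_ hHstar0
  nlinarith [mul_nonneg (mul_nonneg (by positivity : (0:ℝ) ≤ 4 * (n : ℝ)) hE0)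
    (sub_nonneg.2 hEleR), sq_nonneg R]
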